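/- Let I and D be finite nonempty sets, for each d ∈ D let I^d ⊆ I be nonempty, let ν > 0, θ_i^d ∈ ℝ, ρ^d > 0 for each d ∈ D, and for each i ∈ I let V_i : ℝ → ℝ be antitone and continuous. A family (ρ_i^d)_{d∈D, i∈I^d} with ρ_i^d > 0 and Σ_{i∈I^d} ρ_i^d = ρ^d for all d satisfies the Logit lane assignment equations ρ_i^d = ρ^d · exp((V_i(ρ_i) + θ_i^d)/ν) / Σ_{j∈I^d} exp((V_j(ρ_j) + θ_j^d)/ν) for all d ∈ D and i ∈ I^d (where ρ_i = Σ_{d : i∈I^d} ρ_i^d) if and only if it maximizes, over the set of all positive feasible families, the function J((ρ_i^d)) = Σ_{i∈I} ∫_0^{ρ_i} V_i(r) dr + Σ_{d∈D} Σ_{i∈I^d} θ_i^d ρ_i^d − ν Σ_{d∈D} Σ_{i∈I^d} ρ^d H(ρ_i^d/ρ^d). -/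

import Mathlib

open Finset Real

/-- The negentropy function `H(x) = x (ln x - 1)`. -/
noncomputable def negentropy (x : ℝ) : ℝ := x * (Real.log x - 1)

lemma negentropy_grad {a b : ℝ} (ha : 0 < a) (hb : 0 < b) :
    Real.log a * (b - a) ≤ negentropy b - negentropy a := by
  have h1 : Real.log (a / b) ≤ a / b - 1 := Real.log_le_sub_one_of_pos (div_pos ha hb)
  have h2 : Real.log (a / b) = Real.log a - Real.log b := Real.log_div ha.ne' hb.ne'
  have h3 : b * (Real.log a - Real.log b) ≤ b * (a / b - 1) := by
    rw [← h2]; exact mul_le_mul_of_nonneg_left h1 hb.le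
  have h4 : b * (a / b - 1) = a - b := by field_simp
  simp only [negentropy]
  nlinarith [h3, h4]

lemma integral_le_left {V : ℝ → ℝ} (hV : Antitone V) (hVc : Continuous V) (a b : ℝ) :
    ∫ s in a..b, V s ≤ V a * (b - a) := by
  rcases le_total a b with hab | hab
  · have h : ∫ s in a..b, V s ≤ ∫ s in a..b, V a :=
      intervalIntegral.integral_mono_on hab (hVc.intervalIntegrable a b)
        (intervalIntegrable_const) (fun s hs => hV hs.1)
    simpa [intervalIntegral.integral_const, smul_eq_mul, mul_comm] using h
  · rw [intervalIntegral.integral_symm]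
    have h : ∫ s in b..a, V a ≤ ∫ s in b..a, V s :=
      intervalIntegral.integral_mono_on hab intervalIntegrable_const
        (hVc.intervalIntegrable b a) (fun s hs => hV hs.2)
    rw [intervalIntegral.integral_const, smul_eq_mul] at h
    nlinarith [h]

lemma integral_ge_right {V : ℝ → ℝ} (hV : Antitone V) (hVc : Continuous V) {a b : ℝ}
    (hab : a ≤ b) : V b * (b - a) ≤ ∫ s in a..b, V s := by
  have h : ∫ s in a..b, V b ≤ ∫ s in a..b, V s :=
    intervalIntegral.integral_mono_on hab intervalIntegrable_const
      (hVc.intervalIntegrable a b) (fun s hs => hV hs.2)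
  simpa [intervalIntegral.integral_const, smul_eq_mul, mul_comm] using h

lemma sum_perturb2 {α : Type*} [DecidableEq α] (s : Finset α) (f g : α → ℝ) (i j : α)
    (hi : i ∈ s) (hj : j ∈ s) (hij : i ≠ j)
    (h : ∀ k ∈ s, k ≠ i → k ≠ j → f k = g k) :
    ∑ k ∈ s, f k = (∑ k ∈ s, g k) + (f i - g i) + (f j - g j) := by
  have key : ∑ k ∈ s, (f k - g k)
      = ∑ k ∈ s, ((if k = i then f i - g i else 0) + (if k = j then f j - g j else 0)) := by
    refine Finset.sum_congr rfl (fun k hk => ?_)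
    by_cases h1 : k = i
    · subst h1; simp [hij]
    · by_cases h2 : k = j
      · subst h2; simp [h1]
      · simp [h1, h2, h k hk h1 h2]
  rw [Finset.sum_sub_distrib, Finset.sum_add_distrib, Finset.sum_ite_eq' s i,
    Finset.sum_ite_eq' s j, if_pos hi, if_pos hj] at key
  linarith

lemma sum_perturb_double {D I : Type*} [Fintype D] [DecidableEq I]
    (Id : D → Finset I) (f g : D → I → ℝ) (d : D) (i j : I)
    (hi : i ∈ Id d) (hj : j ∈ Id d) (hij : i ≠ j)
    (h : ∀ δ, ∀ k ∈ Id δ, ¬(δ = d ∧ k = i) → ¬(δ = d ∧ k = j) → f δ k = g δ k) :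
    ∑ δ, ∑ k ∈ Id δ, f δ k
      = (∑ δ, ∑ k ∈ Id δ, g δ k) + (f d i - g d i) + (f d j - g d j) := by
  classical
  have inner : ∀ δ, δ ≠ d → ∑ k ∈ Id δ, f δ k = ∑ k ∈ Id δ, g δ k := by
    intro δ hδ
    exact Finset.sum_congr rfl fun k hk =>
      h δ k hk (fun hc => hδ hc.1) (fun hc => hδ hc.1)
  have hd : ∑ k ∈ Id d, f d k
      = (∑ k ∈ Id d, g d k) + (f d i - g d i) + (f d j - g d j) :=
    sum_perturb2 (Id d) (f d) (g d) i j hi hj hij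
      (fun k hk h1 h2 => h d k hk (fun hc => h1 hc.2) (fun hc => h2 hc.2))
  have key : ∑ δ, ((∑ k ∈ Id δ, f δ k) - ∑ k ∈ Id δ, g δ k)
      = ∑ δ : D, (if δ = d then (f d i - g d i) + (f d j - g d j) else 0) := by
    refine Finset.sum_congr rfl fun δ _ => ?_
    by_cases hδ : δ = d
    · subst hδ; rw [hd]; simp; ring
    · simp [hδ, inner δ hδ]
  rw [Finset.sum_sub_distrib, Finset.sum_ite_eq' Finset.univ d, if_pos (Finset.mem_univ d)]
    at key
  linarith

lemma aux_max {I D : Type*} [Fintype I] [Fintype D] [DecidableEq I]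
    (Id : D → Finset I) (ν : ℝ) (hν : 0 < ν) (θ : D → I → ℝ) (r : D → ℝ) (hr : ∀ d, 0 < r d)
    (V : I → ℝ → ℝ) (hV : ∀ i, Antitone (V i)) (hVc : ∀ i, Continuous (V i))
    (ρ σ : D → I → ℝ)
    (hρpos : ∀ d, ∀ i ∈ Id d, 0 < ρ d i) (hρsum : ∀ d, ∑ i ∈ Id d, ρ d i = r d)
    (hσpos : ∀ d, ∀ i ∈ Id d, 0 < σ d i) (hσsum : ∀ d, ∑ i ∈ Id d, σ d i = r d)
    (c : D → ℝ)
    (hK : ∀ d, ∀ i ∈ Id d,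
      V i (∑ δ ∈ Finset.univ.filter (fun δ => i ∈ Id δ), ρ δ i) + θ d i
        - ν * Real.log (ρ d i / r d) = c d) :
    (∑ i, ∫ s in (0:ℝ)..(∑ d ∈ Finset.univ.filter (fun d => i ∈ Id d), σ d i), V i s)
      + (∑ d, ∑ i ∈ Id d, θ d i * σ d i)
      - ν * ∑ d, ∑ i ∈ Id d, r d * negentropy (σ d i / r d)
    ≤ (∑ i, ∫ s in (0:ℝ)..(∑ d ∈ Finset.univ.filter (fun d => i ∈ Id d), ρ d i), V i s)
      + (∑ d, ∑ i ∈ Id d, θ d i * ρ d i)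
      - ν * ∑ d, ∑ i ∈ Id d, r d * negentropy (ρ d i / r d) := by
  classical
  -- abbreviations
  have hint : ∀ i : I,
      (∫ s in (0:ℝ)..(∑ d ∈ Finset.univ.filter (fun d => i ∈ Id d), σ d i), V i s)
      - (∫ s in (0:ℝ)..(∑ d ∈ Finset.univ.filter (fun d => i ∈ Id d), ρ d i), V i s)
      ≤ V i (∑ d ∈ Finset.univ.filter (fun d => i ∈ Id d), ρ d i) *
          ((∑ d ∈ Finset.univ.filter (fun d => i ∈ Id d), σ d i)
            - (∑ d ∈ Finset.univ.filter (fun d => i ∈ Id d), ρ d i)) := by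
    intro i
    rw [intervalIntegral.integral_interval_sub_left ((hVc i).intervalIntegrable _ _)
      ((hVc i).intervalIntegrable _ _)]
    exact integral_le_left (hV i) (hVc i) _ _
  -- sum of integral differences
  have hT1 : (∑ i, ∫ s in (0:ℝ)..(∑ d ∈ Finset.univ.filter (fun d => i ∈ Id d), σ d i), V i s)
      - (∑ i, ∫ s in (0:ℝ)..(∑ d ∈ Finset.univ.filter (fun d => i ∈ Id d), ρ d i), V i s)
      ≤ ∑ i, V i (∑ d ∈ Finset.univ.filter (fun d => i ∈ Id d), ρ d i) *
          ((∑ d ∈ Finset.univ.filter (fun d => i ∈ Id d), σ d i)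
            - (∑ d ∈ Finset.univ.filter (fun d => i ∈ Id d), ρ d i)) := by
    rw [← Finset.sum_sub_distrib]
    exact Finset.sum_le_sum fun i _ => hint i
  -- swap the first sum into a double sum
  have hswap : ∑ i, V i (∑ d ∈ Finset.univ.filter (fun d => i ∈ Id d), ρ d i) *
        ((∑ d ∈ Finset.univ.filter (fun d => i ∈ Id d), σ d i)
          - (∑ d ∈ Finset.univ.filter (fun d => i ∈ Id d), ρ d i))
      = ∑ d, ∑ i ∈ Id d, V i (∑ δ ∈ Finset.univ.filter (fun δ => i ∈ Id δ), ρ δ i) *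
          (σ d i - ρ d i) := by
    have step1 : ∀ i : I, V i (∑ d ∈ Finset.univ.filter (fun d => i ∈ Id d), ρ d i) *
        ((∑ d ∈ Finset.univ.filter (fun d => i ∈ Id d), σ d i)
          - (∑ d ∈ Finset.univ.filter (fun d => i ∈ Id d), ρ d i))
        = ∑ d : D, if i ∈ Id d then
            V i (∑ δ ∈ Finset.univ.filter (fun δ => i ∈ Id δ), ρ δ i) * (σ d i - ρ d i)
          else 0 := by
      intro i
      rw [← Finset.sum_sub_distrib, Finset.mul_sum, ← Finset.sum_filter]
    rw [Finset.sum_congr rfl fun i _ => step1 i, Finset.sum_comm]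
    refine Finset.sum_congr rfl fun d _ => ?_
    rw [Finset.sum_ite_mem, Finset.univ_inter]
  -- entropy bound
  have hent : ∀ d : D, ∀ i ∈ Id d,
      Real.log (ρ d i / r d) * (σ d i - ρ d i)
        ≤ r d * negentropy (σ d i / r d) - r d * negentropy (ρ d i / r d) := by
    intro d i hi
    have h := negentropy_grad (div_pos (hρpos d i hi) (hr d)) (div_pos (hσpos d i hi) (hr d))
    have h2 : r d * (Real.log (ρ d i / r d) * (σ d i / r d - ρ d i / r d))
        ≤ r d * (negentropy (σ d i / r d) - negentropy (ρ d i / r d)) :=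
      mul_le_mul_of_nonneg_left h (hr d).le
    have h3 : r d * (Real.log (ρ d i / r d) * (σ d i / r d - ρ d i / r d))
        = Real.log (ρ d i / r d) * (σ d i - ρ d i) := by
      have hrd : (r d) ≠ 0 := (hr d).ne'
      field_simp
    nlinarith [h2, h3]
  have hT3 : ∑ d, ∑ i ∈ Id d, Real.log (ρ d i / r d) * (σ d i - ρ d i)
      ≤ (∑ d, ∑ i ∈ Id d, r d * negentropy (σ d i / r d))
        - ∑ d, ∑ i ∈ Id d, r d * negentropy (ρ d i / r d) := by
    rw [← Finset.sum_sub_distrib]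
    refine Finset.sum_le_sum fun d _ => ?_
    rw [← Finset.sum_sub_distrib]
    exact Finset.sum_le_sum fun i hi => hent d i hi
  -- the KKT sum is zero
  have hzero : ∑ d, ∑ i ∈ Id d,
      (V i (∑ δ ∈ Finset.univ.filter (fun δ => i ∈ Id δ), ρ δ i) + θ d i
        - ν * Real.log (ρ d i / r d)) * (σ d i - ρ d i) = 0 := by
    refine Finset.sum_eq_zero fun d _ => ?_
    have : ∑ i ∈ Id d, (V i (∑ δ ∈ Finset.univ.filter (fun δ => i ∈ Id δ), ρ δ i) + θ d i
        - ν * Real.log (ρ d i / r d)) * (σ d i - ρ d i)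
        = ∑ i ∈ Id d, c d * (σ d i - ρ d i) := by
      refine Finset.sum_congr rfl fun i hi => ?_
      rw [hK d i hi]
    rw [this, ← Finset.mul_sum, Finset.sum_sub_distrib, hσsum d, hρsum d, sub_self, mul_zero]
  -- expand hzero
  have hexpand : ∑ d, ∑ i ∈ Id d,
      (V i (∑ δ ∈ Finset.univ.filter (fun δ => i ∈ Id δ), ρ δ i) + θ d i
        - ν * Real.log (ρ d i / r d)) * (σ d i - ρ d i)
      = (∑ d, ∑ i ∈ Id d, V i (∑ δ ∈ Finset.univ.filter (fun δ => i ∈ Id δ), ρ δ i) *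
          (σ d i - ρ d i))
        + (∑ d, ∑ i ∈ Id d, θ d i * (σ d i - ρ d i))
        - ν * ∑ d, ∑ i ∈ Id d, Real.log (ρ d i / r d) * (σ d i - ρ d i) := by
    rw [Finset.mul_sum]
    simp only [Finset.mul_sum]
    rw [← Finset.sum_add_distrib, ← Finset.sum_sub_distrib]
    refine Finset.sum_congr rfl fun d _ => ?_
    rw [← Finset.sum_add_distrib, ← Finset.sum_sub_distrib]
    refine Finset.sum_congr rfl fun i _ => ?_
    ring
  have hθ : ∑ d, ∑ i ∈ Id d, θ d i * (σ d i - ρ d i)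
      = (∑ d, ∑ i ∈ Id d, θ d i * σ d i) - ∑ d, ∑ i ∈ Id d, θ d i * ρ d i := by
    rw [← Finset.sum_sub_distrib]
    refine Finset.sum_congr rfl fun d _ => ?_
    rw [← Finset.sum_sub_distrib]
    exact Finset.sum_congr rfl fun i _ => by ring
  -- conclude
  have hT3' : ν * ∑ d, ∑ i ∈ Id d, Real.log (ρ d i / r d) * (σ d i - ρ d i)
      ≤ ν * ((∑ d, ∑ i ∈ Id d, r d * negentropy (σ d i / r d))
        - ∑ d, ∑ i ∈ Id d, r d * negentropy (ρ d i / r d)) :=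
    mul_le_mul_of_nonneg_left hT3 hν.le
  linarith [hT1, hswap ▸ hT1, hzero, hexpand, hθ, hT3']

set_option maxHeartbeats 1000000 in
lemma aux_K {I D : Type*} [Fintype I] [Fintype D] [DecidableEq I]
    (Id : D → Finset I)
    (ν : ℝ) (hν : 0 < ν) (θ : D → I → ℝ) (r : D → ℝ) (hr : ∀ d, 0 < r d)
    (V : I → ℝ → ℝ) (hV : ∀ i, Antitone (V i)) (hVc : ∀ i, Continuous (V i))
    (ρ : D → I → ℝ)
    (hρpos : ∀ d, ∀ i ∈ Id d, 0 < ρ d i) (hρ0 : ∀ d, ∀ i ∉ Id d, ρ d i = 0)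
    (hρsum : ∀ d, ∑ i ∈ Id d, ρ d i = r d)
    (hmax : ∀ σ : D → I → ℝ, (∀ d, ∀ i ∈ Id d, 0 < σ d i) →
      (∀ d, ∀ i ∉ Id d, σ d i = 0) → (∀ d, ∑ i ∈ Id d, σ d i = r d) →
      (∑ k, ∫ s in (0:ℝ)..(∑ δ ∈ Finset.univ.filter (fun δ => k ∈ Id δ), σ δ k), V k s)
        + (∑ δ, ∑ k ∈ Id δ, θ δ k * σ δ k)
        - ν * ∑ δ, ∑ k ∈ Id δ, r δ * negentropy (σ δ k / r δ)
      ≤ (∑ k, ∫ s in (0:ℝ)..(∑ δ ∈ Finset.univ.filter (fun δ => k ∈ Id δ), ρ δ k), V k s)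
        + (∑ δ, ∑ k ∈ Id δ, θ δ k * ρ δ k)
        - ν * ∑ δ, ∑ k ∈ Id δ, r δ * negentropy (ρ δ k / r δ))
    (d : D) (i j : I) (hi : i ∈ Id d) (hj : j ∈ Id d) :
    V i (∑ δ ∈ Finset.univ.filter (fun δ => i ∈ Id δ), ρ δ i) + θ d i
        - ν * Real.log (ρ d i / r d)
      ≤ V j (∑ δ ∈ Finset.univ.filter (fun δ => j ∈ Id δ), ρ δ j) + θ d j
        - ν * Real.log (ρ d j / r d) := by
  classical
  by_cases hij : i = j
  · subst hij; exact le_refl _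
  set Ai : ℝ := ∑ δ ∈ Finset.univ.filter (fun δ => i ∈ Id δ), ρ δ i with hAi
  set Aj : ℝ := ∑ δ ∈ Finset.univ.filter (fun δ => j ∈ Id δ), ρ δ j with hAj
  set F : ℝ → ℝ := fun t =>
    (V i (Ai + t) + θ d i - ν * Real.log ((ρ d i + t) / r d))
    - (V j (Aj - t) + θ d j - ν * Real.log ((ρ d j - t) / r d)) with hF
  have hFle : ∀ t, 0 < t → t < ρ d j → F t ≤ 0 := by
    intro t ht htj
    set σ : D → I → ℝ := fun δ k =>
      ρ δ k + (if δ = d ∧ k = i then t else 0) - (if δ = d ∧ k = j then t else 0) with hσ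
    have hσdi : σ d i = ρ d i + t := by simp [hσ, hij]
    have hσdj : σ d j = ρ d j - t := by simp [hσ, Ne.symm hij]
    have hσother : ∀ δ k, ¬(δ = d ∧ k = i) → ¬(δ = d ∧ k = j) → σ δ k = ρ δ k := by
      intro δ k h1 h2; simp [hσ, h1, h2]
    -- σ is feasible
    have hσpos : ∀ δ, ∀ k ∈ Id δ, 0 < σ δ k := by
      intro δ k hk
      by_cases h1 : δ = d ∧ k = i
      · obtain ⟨h1a, h1b⟩ := h1; subst h1a; subst h1b
        rw [hσdi]; linarith [hρpos _ _ hk]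
      · by_cases h2 : δ = d ∧ k = j
        · obtain ⟨h2a, h2b⟩ := h2; subst h2a; subst h2b
          rw [hσdj]; linarith
        · rw [hσother δ k h1 h2]; exact hρpos δ k hk
    have hσ0 : ∀ δ, ∀ k ∉ Id δ, σ δ k = 0 := by
      intro δ k hk
      have h1 : ¬(δ = d ∧ k = i) := by rintro ⟨rfl, rfl⟩; exact hk hi
      have h2 : ¬(δ = d ∧ k = j) := by rintro ⟨rfl, rfl⟩; exact hk hj
      rw [hσother δ k h1 h2]; exact hρ0 δ k hk
    have hite1 : ∀ δ, ∑ k ∈ Id δ, (if δ = d ∧ k = i then t else 0)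
        = if δ = d then t else 0 := by
      intro δ
      by_cases hδ : δ = d
      · rw [hδ]; simp [Finset.sum_ite_eq', hi]
      · simp [hδ]
    have hite2 : ∀ δ, ∑ k ∈ Id δ, (if δ = d ∧ k = j then t else 0)
        = if δ = d then t else 0 := by
      intro δ
      by_cases hδ : δ = d
      · rw [hδ]; simp [Finset.sum_ite_eq', hj]
      · simp [hδ]
    have hσsum : ∀ δ, ∑ k ∈ Id δ, σ δ k = r δ := by
      intro δ
      simp only [hσ, Finset.sum_sub_distrib, Finset.sum_add_distrib, hite1 δ, hite2 δ,
        hρsum δ]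
      ring
    -- aggregates
    have hAgg : ∀ k, (∑ δ ∈ Finset.univ.filter (fun δ => k ∈ Id δ), σ δ k)
        = (∑ δ ∈ Finset.univ.filter (fun δ => k ∈ Id δ), ρ δ k)
          + (if k = i then t else 0) - (if k = j then t else 0) := by
      intro k
      have e1 : ∑ δ ∈ Finset.univ.filter (fun δ => k ∈ Id δ), (if δ = d ∧ k = i then t else 0)
          = if k = i then t else 0 := by
        by_cases hk : k = i
        · rw [hk]
          simp only [and_true, if_pos]
          rw [Finset.sum_ite_eq' _ d (fun _ => t), if_pos]
          exact Finset.mem_filter.2 ⟨Finset.mem_univ d, hi⟩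
        · simp [hk]
      have e2 : ∑ δ ∈ Finset.univ.filter (fun δ => k ∈ Id δ), (if δ = d ∧ k = j then t else 0)
          = if k = j then t else 0 := by
        by_cases hk : k = j
        · rw [hk]
          simp only [and_true, if_pos]
          rw [Finset.sum_ite_eq' _ d (fun _ => t), if_pos]
          exact Finset.mem_filter.2 ⟨Finset.mem_univ d, hj⟩
        · simp [hk]
      simp only [hσ, Finset.sum_sub_distrib, Finset.sum_add_distrib, e1, e2]
    have hAggi : (∑ δ ∈ Finset.univ.filter (fun δ => i ∈ Id δ), σ δ i) = Ai + t := by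
      rw [hAgg i]; simp [hij, hAi]
    have hAggj : (∑ δ ∈ Finset.univ.filter (fun δ => j ∈ Id δ), σ δ j) = Aj - t := by
      rw [hAgg j]; simp [Ne.symm hij, hAj]
    have hAggo : ∀ k, k ≠ i → k ≠ j →
        (∑ δ ∈ Finset.univ.filter (fun δ => k ∈ Id δ), σ δ k)
        = (∑ δ ∈ Finset.univ.filter (fun δ => k ∈ Id δ), ρ δ k) := by
      intro k h1 h2; rw [hAgg k]; simp [h1, h2]
    -- main inequality from hmax
    have hJ := hmax σ hσpos hσ0 hσsum
    -- decompose the integral sum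
    have eInt : (∑ k, ∫ s in (0:ℝ)..(∑ δ ∈ Finset.univ.filter (fun δ => k ∈ Id δ), σ δ k), V k s)
        = (∑ k, ∫ s in (0:ℝ)..(∑ δ ∈ Finset.univ.filter (fun δ => k ∈ Id δ), ρ δ k), V k s)
          + ((∫ s in (0:ℝ)..(Ai + t), V i s) - ∫ s in (0:ℝ)..Ai, V i s)
          + ((∫ s in (0:ℝ)..(Aj - t), V j s) - ∫ s in (0:ℝ)..Aj, V j s) := by
      have h := sum_perturb2 (Finset.univ : Finset I)
        (fun k => ∫ s in (0:ℝ)..(∑ δ ∈ Finset.univ.filter (fun δ => k ∈ Id δ), σ δ k), V k s)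
        (fun k => ∫ s in (0:ℝ)..(∑ δ ∈ Finset.univ.filter (fun δ => k ∈ Id δ), ρ δ k), V k s)
        i j (Finset.mem_univ i) (Finset.mem_univ j) hij
        (fun k _ h1 h2 => by rw [hAggo k h1 h2])
      simp only [hAggi, hAggj] at h
      exact h
    -- decompose the θ sum
    have eθ : (∑ δ, ∑ k ∈ Id δ, θ δ k * σ δ k)
        = (∑ δ, ∑ k ∈ Id δ, θ δ k * ρ δ k) + θ d i * t - θ d j * t := by
      have h := sum_perturb_double Id (fun δ k => θ δ k * σ δ k) (fun δ k => θ δ k * ρ δ k)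
        d i j hi hj hij (fun δ k _ h1 h2 => by rw [hσother δ k h1 h2])
      simp only [hσdi, hσdj] at h
      rw [h]; ring
    -- decompose the entropy sum
    have eEnt : (∑ δ, ∑ k ∈ Id δ, r δ * negentropy (σ δ k / r δ))
        = (∑ δ, ∑ k ∈ Id δ, r δ * negentropy (ρ δ k / r δ))
          + (r d * negentropy ((ρ d i + t) / r d) - r d * negentropy (ρ d i / r d))
          + (r d * negentropy ((ρ d j - t) / r d) - r d * negentropy (ρ d j / r d)) := by
      have h := sum_perturb_double Id (fun δ k => r δ * negentropy (σ δ k / r δ))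
        (fun δ k => r δ * negentropy (ρ δ k / r δ))
        d i j hi hj hij (fun δ k _ h1 h2 => by rw [hσother δ k h1 h2])
      simp only [hσdi, hσdj] at h
      exact h
    rw [eInt, eθ, eEnt] at hJ
    -- bounds on the integral increments
    have b1 : V i (Ai + t) * t ≤ (∫ s in (0:ℝ)..(Ai + t), V i s) - ∫ s in (0:ℝ)..Ai, V i s := by
      rw [intervalIntegral.integral_interval_sub_left ((hVc i).intervalIntegrable _ _)
        ((hVc i).intervalIntegrable _ _)]
      have := integral_ge_right (hV i) (hVc i) (a := Ai) (b := Ai + t) (by linarith)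
      simpa using this
    have b2 : -(V j (Aj - t) * t) ≤ (∫ s in (0:ℝ)..(Aj - t), V j s) - ∫ s in (0:ℝ)..Aj, V j s := by
      rw [intervalIntegral.integral_interval_sub_left ((hVc j).intervalIntegrable _ _)
        ((hVc j).intervalIntegrable _ _)]
      rw [intervalIntegral.integral_symm]
      have := integral_le_left (hV j) (hVc j) (Aj - t) Aj
      have h2 : Aj - (Aj - t) = t := by ring
      rw [h2] at this
      linarith
    -- auxiliary division fact
    have hrt : r d * (t / r d) = t := by
      rw [mul_comm, div_mul_cancel₀ _ (hr d).ne']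
    -- bounds on the entropy increments
    have b3 : r d * negentropy ((ρ d i + t) / r d) - r d * negentropy (ρ d i / r d)
        ≤ t * Real.log ((ρ d i + t) / r d) := by
      have hpos1 : 0 < (ρ d i + t) / r d := div_pos (by linarith [hρpos d i hi]) (hr d)
      have hpos2 : 0 < ρ d i / r d := div_pos (hρpos d i hi) (hr d)
      have h := negentropy_grad hpos1 hpos2
      have hid : ρ d i / r d - (ρ d i + t) / r d = -(t / r d) := by
        rw [div_sub_div_same, show ρ d i - (ρ d i + t) = -t from by ring, neg_div]
      rw [hid] at h
      have h2 := mul_le_mul_of_nonneg_left h (hr d).le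
      have h3 : r d * (Real.log ((ρ d i + t) / r d) * -(t / r d))
          = -(t * Real.log ((ρ d i + t) / r d)) := by
        rw [mul_neg, mul_neg]
        congr 1
        rw [mul_comm (Real.log ((ρ d i + t) / r d)) (t / r d), ← mul_assoc, hrt]
      rw [h3, mul_sub] at h2
      linarith
    have b4 : r d * negentropy ((ρ d j - t) / r d) - r d * negentropy (ρ d j / r d)
        ≤ -(t * Real.log ((ρ d j - t) / r d)) := by
      have hpos1 : 0 < (ρ d j - t) / r d := div_pos (by linarith) (hr d)
      have hpos2 : 0 < ρ d j / r d := div_pos (hρpos d j hj) (hr d)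
      have h := negentropy_grad hpos1 hpos2
      have hid : ρ d j / r d - (ρ d j - t) / r d = t / r d := by
        rw [div_sub_div_same, show ρ d j - (ρ d j - t) = t from by ring]
      rw [hid] at h
      have h2 := mul_le_mul_of_nonneg_left h (hr d).le
      have h3 : r d * (Real.log ((ρ d j - t) / r d) * (t / r d))
          = t * Real.log ((ρ d j - t) / r d) := by
        rw [mul_comm (Real.log ((ρ d j - t) / r d)) (t / r d), ← mul_assoc, hrt]
      rw [h3, mul_sub] at h2
      linarith
    -- combine
    have hb3 : ν * (r d * negentropy ((ρ d i + t) / r d) - r d * negentropy (ρ d i / r d))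
        ≤ ν * (t * Real.log ((ρ d i + t) / r d)) := mul_le_mul_of_nonneg_left b3 hν.le
    have hb4 : ν * (r d * negentropy ((ρ d j - t) / r d) - r d * negentropy (ρ d j / r d))
        ≤ ν * (-(t * Real.log ((ρ d j - t) / r d))) := mul_le_mul_of_nonneg_left b4 hν.le
    have htF : t * F t ≤ 0 := by
      have hFt : F t = (V i (Ai + t) + θ d i - ν * Real.log ((ρ d i + t) / r d))
          - (V j (Aj - t) + θ d j - ν * Real.log ((ρ d j - t) / r d)) := by rw [hF]
      rw [hFt]
      nlinarith [hJ, b1, b2, hb3, hb4]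
    nlinarith [htF, ht]
  -- pass to the limit t → 0⁺
  have hc1 : ContinuousAt (fun t : ℝ => V i (Ai + t)) 0 :=
    ((hVc i).comp (continuous_const.add continuous_id)).continuousAt
  have hc3 : ContinuousAt (fun t : ℝ => V j (Aj - t)) 0 :=
    ((hVc j).comp (continuous_const.sub continuous_id)).continuousAt
  have hc2 : ContinuousAt (fun t : ℝ => Real.log ((ρ d i + t) / r d)) 0 := by
    have hne : (ρ d i + (0:ℝ)) / r d ≠ 0 :=
      (div_pos (by simpa using hρpos d i hi) (hr d)).ne'
    have hf : ContinuousAt (fun t : ℝ => (ρ d i + t) / r d) 0 :=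
      ((continuous_const.add continuous_id).div_const (r d)).continuousAt
    exact ContinuousAt.comp (g := Real.log) (x := (0:ℝ)) (Real.continuousAt_log hne) hf
  have hc4 : ContinuousAt (fun t : ℝ => Real.log ((ρ d j - t) / r d)) 0 := by
    have hne : (ρ d j - (0:ℝ)) / r d ≠ 0 :=
      (div_pos (by simpa using hρpos d j hj) (hr d)).ne'
    have hf : ContinuousAt (fun t : ℝ => (ρ d j - t) / r d) 0 :=
      ((continuous_const.sub continuous_id).div_const (r d)).continuousAt
    exact ContinuousAt.comp (g := Real.log) (x := (0:ℝ)) (Real.continuousAt_log hne) hf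
  have hcont : ContinuousAt F 0 := by
    rw [hF]
    exact ((hc1.add continuousAt_const).sub (continuousAt_const.mul hc2)).sub
      ((hc3.add continuousAt_const).sub (continuousAt_const.mul hc4))
  have hF0 : F 0 ≤ 0 := by
    have htend : Filter.Tendsto F (nhdsWithin 0 (Set.Ioi 0)) (nhds (F 0)) :=
      hcont.continuousWithinAt.tendsto
    refine le_of_tendsto htend ?_
    filter_upwards [Ioo_mem_nhdsGT_of_mem
      (show (0:ℝ) ∈ Set.Ico (0:ℝ) (ρ d j) from ⟨le_refl 0, hρpos d j hj⟩)] with t ht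
    exact hFle t ht.1 ht.2
  rw [hF] at hF0
  simp only [add_zero, sub_zero] at hF0
  linarith

/-- A positive feasible family satisfies the Logit lane assignment equations
iff it maximizes the Beckmann-type objective `J` over all positive feasible families.
Families are encoded as `ρ : D → I → ℝ` vanishing off the accessibility graph. -/
theorem logit_equations_iff_max
    (I D : Type*) [Fintype I] [Fintype D] [Nonempty I] [Nonempty D] [DecidableEq I]
    (Id : D → Finset I) (hId : ∀ d, (Id d).Nonempty)
    (ν : ℝ) (hν : 0 < ν) (θ : D → I → ℝ) (r : D → ℝ) (hr : ∀ d, 0 < r d)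
    (V : I → ℝ → ℝ) (hV : ∀ i, Antitone (V i)) (hVc : ∀ i, Continuous (V i))
    (S : Set (D → I → ℝ))
    (hS : S = {σ | (∀ d, ∀ i ∈ Id d, 0 < σ d i) ∧ (∀ d, ∀ i ∉ Id d, σ d i = 0) ∧
                   (∀ d, ∑ i ∈ Id d, σ d i = r d)})
    (J : (D → I → ℝ) → ℝ)
    (hJ : J = fun σ =>
      (∑ i, ∫ s in (0:ℝ)..(∑ d ∈ Finset.univ.filter (fun d => i ∈ Id d), σ d i), V i s)
      + (∑ d, ∑ i ∈ Id d, θ d i * σ d i)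
      - ν * ∑ d, ∑ i ∈ Id d, r d * negentropy (σ d i / r d))
    (ρ : D → I → ℝ) (hρ : ρ ∈ S) :
    (∀ d, ∀ i ∈ Id d,
        ρ d i = r d *
          Real.exp ((V i (∑ δ ∈ Finset.univ.filter (fun δ => i ∈ Id δ), ρ δ i) + θ d i) / ν) /
          ∑ j ∈ Id d,
            Real.exp ((V j (∑ δ ∈ Finset.univ.filter (fun δ => j ∈ Id δ), ρ δ j) + θ d j) / ν))
      ↔ (∀ σ ∈ S, J σ ≤ J ρ) := by
  classical
  subst hS
  subst hJ
  obtain ⟨hρpos, hρ0, hρsum⟩ := hρ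
  constructor
  · -- logit equations imply maximality
    intro hlogit σ hσ
    obtain ⟨hσpos, hσ0, hσsum⟩ := hσ
    have hZpos : ∀ d : D, 0 < ∑ k ∈ Id d,
        Real.exp ((V k (∑ δ ∈ Finset.univ.filter (fun δ => k ∈ Id δ), ρ δ k) + θ d k) / ν) :=
      fun d => Finset.sum_pos (fun k _ => Real.exp_pos _) (hId d)
    have hK : ∀ d, ∀ i ∈ Id d,
        V i (∑ δ ∈ Finset.univ.filter (fun δ => i ∈ Id δ), ρ δ i) + θ d i
          - ν * Real.log (ρ d i / r d)
        = ν * Real.log (∑ k ∈ Id d,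
            Real.exp ((V k (∑ δ ∈ Finset.univ.filter (fun δ => k ∈ Id δ), ρ δ k) + θ d k) / ν)) := by
      intro d i hi
      have hdiv : ρ d i / r d
          = Real.exp ((V i (∑ δ ∈ Finset.univ.filter (fun δ => i ∈ Id δ), ρ δ i) + θ d i) / ν)
            / ∑ k ∈ Id d,
              Real.exp ((V k (∑ δ ∈ Finset.univ.filter (fun δ => k ∈ Id δ), ρ δ k) + θ d k) / ν) := by
        rw [hlogit d i hi]
        field_simp [(hr d).ne', (hZpos d).ne']
      rw [hdiv, Real.log_div (Real.exp_ne_zero _) (hZpos d).ne', Real.log_exp, mul_sub,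
        mul_div_cancel₀ _ hν.ne']
      ring
    exact aux_max Id ν hν θ r hr V hV hVc ρ σ hρpos hρsum hσpos hσsum _ hK
  · -- maximality implies logit equations
    intro hmax d i hi
    have hmax' : ∀ σ : D → I → ℝ, (∀ d, ∀ i ∈ Id d, 0 < σ d i) →
        (∀ d, ∀ i ∉ Id d, σ d i = 0) → (∀ d, ∑ i ∈ Id d, σ d i = r d) →
        (∑ k, ∫ s in (0:ℝ)..(∑ δ ∈ Finset.univ.filter (fun δ => k ∈ Id δ), σ δ k), V k s)
          + (∑ δ, ∑ k ∈ Id δ, θ δ k * σ δ k)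
          - ν * ∑ δ, ∑ k ∈ Id δ, r δ * negentropy (σ δ k / r δ)
        ≤ (∑ k, ∫ s in (0:ℝ)..(∑ δ ∈ Finset.univ.filter (fun δ => k ∈ Id δ), ρ δ k), V k s)
          + (∑ δ, ∑ k ∈ Id δ, θ δ k * ρ δ k)
          - ν * ∑ δ, ∑ k ∈ Id δ, r δ * negentropy (ρ δ k / r δ) :=
      fun σ h1 h2 h3 => hmax σ ⟨h1, h2, h3⟩
    have key : ∀ k ∈ Id d,
        V k (∑ δ ∈ Finset.univ.filter (fun δ => k ∈ Id δ), ρ δ k) + θ d k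
          - ν * Real.log (ρ d k / r d)
        = V i (∑ δ ∈ Finset.univ.filter (fun δ => i ∈ Id δ), ρ δ i) + θ d i
          - ν * Real.log (ρ d i / r d) := by
      intro k hk
      exact le_antisymm
        (aux_K Id ν hν θ r hr V hV hVc ρ hρpos hρ0 hρsum hmax' d k i hk hi)
        (aux_K Id ν hν θ r hr V hV hVc ρ hρpos hρ0 hρsum hmax' d i k hi hk)
    set μ : ℝ := V i (∑ δ ∈ Finset.univ.filter (fun δ => i ∈ Id δ), ρ δ i) + θ d i
      - ν * Real.log (ρ d i / r d) with hμ
    have hexp : ∀ k ∈ Id d, ρ d k / r d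
        = Real.exp ((V k (∑ δ ∈ Finset.univ.filter (fun δ => k ∈ Id δ), ρ δ k) + θ d k) / ν)
          * Real.exp (-(μ / ν)) := by
      intro k hk
      have hKk := key k hk
      have hlog : Real.log (ρ d k / r d)
          = (V k (∑ δ ∈ Finset.univ.filter (fun δ => k ∈ Id δ), ρ δ k) + θ d k - μ) / ν := by
        rw [eq_div_iff hν.ne']
        linarith [hKk]
      rw [← Real.exp_log (div_pos (hρpos d k hk) (hr d)), hlog, ← Real.exp_add]
      congr 1
      field_simp
      ring
    have hZpos : (0:ℝ) < ∑ k ∈ Id d,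
        Real.exp ((V k (∑ δ ∈ Finset.univ.filter (fun δ => k ∈ Id δ), ρ δ k) + θ d k) / ν) :=
      Finset.sum_pos (fun k _ => Real.exp_pos _) (hId d)
    have hsum : (∑ k ∈ Id d,
        Real.exp ((V k (∑ δ ∈ Finset.univ.filter (fun δ => k ∈ Id δ), ρ δ k) + θ d k) / ν))
        * Real.exp (-(μ / ν)) = 1 := by
      have h1 : ∑ k ∈ Id d, ρ d k / r d = 1 := by
        rw [← Finset.sum_div, hρsum d, div_self (hr d).ne']
      rw [Finset.sum_mul]
      rw [Finset.sum_congr rfl (fun k hk => (hexp k hk).symm)]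
      exact h1
    have hinv : Real.exp (-(μ / ν)) = 1 / ∑ k ∈ Id d,
        Real.exp ((V k (∑ δ ∈ Finset.univ.filter (fun δ => k ∈ Id δ), ρ δ k) + θ d k) / ν) := by
      rw [eq_div_iff hZpos.ne', mul_comm]
      exact hsum
    have hdiv := hexp i hi
    rw [hinv] at hdiv
    rw [div_eq_iff (hr d).ne'] at hdiv
    rw [hdiv]
    ring
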